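/- Let ξ = ξ₁ + ξ₂ on ℝ^m with ξ₁ convex differentiable with L-Lipschitz gradient and ξ₂ strongly convex with modulus μ > 0, and let u* be the minimizer of ξ. Suppose u^k minimizes Q(u, û^{k−1}) = ξ₁(û^{k−1}) + ⟨∇ξ₁(û^{k−1}), u − û^{k−1}⟩ + (L_k/2)‖u − û^{k−1}‖² + ξ₂(u) over ℝ^m with 0 < L_k ≤ L, where û^{k−1} = u^{k−1} + ω_{k−1}(u^{k−1} − u^{k−2}) and 0 ≤ ω_{k−1} ≤ 1. Then √(ξ(u^k) − ξ(u*)) ≤ (2L/√μ)(‖u^k − u^{k−1}‖ + ‖u^{k−1} − u^{k−2}‖). -/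

import Mathlib

open scoped RealInnerProductSpace

/-- The subdifferential of `h` at `v`: the set of (global) subgradients. -/
def SubderivAt {m : ℕ} (h : EuclideanSpace ℝ (Fin m) → ℝ)
    (v : EuclideanSpace ℝ (Fin m)) : Set (EuclideanSpace ℝ (Fin m)) :=
  {g | ∀ z, h z ≥ h v + ⟪g, z - v⟫}

/-- First-order lower bound for a convex differentiable function. -/
lemma grad_convex_lower {m : ℕ} (f : EuclideanSpace ℝ (Fin m) → ℝ)
    (hf : ConvexOn ℝ Set.univ f) (x y g : EuclideanSpace ℝ (Fin m))
    (hg : HasGradientAt f g x) :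
    f x + ⟪g, y - x⟫ ≤ f y := by
  have hc : HasDerivAt (fun t : ℝ => t • (y - x) + x) (y - x) 0 := by
    simpa using ((hasDerivAt_id (0 : ℝ)).smul_const (y - x)).add_const x
  have hg' : HasFDerivAt f (InnerProductSpace.toDual ℝ _ g) ((0 : ℝ) • (y - x) + x) := by
    simpa using hg.hasFDerivAt
  have hd : HasDerivAt (fun t : ℝ => f (t • (y - x) + x)) ⟪g, y - x⟫ 0 := by
    have h1 := hg'.comp_hasDerivAt 0 hc
    exact h1
  have hφ : ConvexOn ℝ Set.univ (fun t : ℝ => f (t • (y - x) + x)) := by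
    have h2 := hf.comp_affineMap (AffineMap.lineMap x y)
    have he : (f ∘ (AffineMap.lineMap x y : ℝ →ᵃ[ℝ] EuclideanSpace ℝ (Fin m)))
        = fun t : ℝ => f (t • (y - x) + x) := by
      funext t
      simp [AffineMap.lineMap_apply, Function.comp]
    rw [he] at h2
    simpa using h2
  have hs := hφ.le_slope_of_hasDerivAt (Set.mem_univ (0 : ℝ)) (Set.mem_univ (1 : ℝ))
    zero_lt_one hd
  rw [slope_def_field] at hs
  simp only [one_smul, zero_smul, zero_add, sub_zero, div_one, sub_add_cancel] at hs
  linarith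

set_option maxHeartbeats 1000000 in
/-- the objective-gap bound
`√(ξ(u^k) - ξ(u*)) ≤ (2L/√μ)(‖u^k - u^{k-1}‖ + ‖u^{k-1} - u^{k-2}‖)`
for one extrapolated proximal-gradient step. -/
theorem pg_objective_gap_bound (m : ℕ)
    (ξ₁ ξ₂ : EuclideanSpace ℝ (Fin m) → ℝ)
    (gradξ₁ : EuclideanSpace ℝ (Fin m) → EuclideanSpace ℝ (Fin m))
    (L : ℝ) (hL : 0 < L)
    (hξ₁conv : ConvexOn ℝ Set.univ ξ₁)
    (hξ₁diff : ∀ u, HasGradientAt ξ₁ (gradξ₁ u) u)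
    (hξ₁lip : ∀ u v, ‖gradξ₁ u - gradξ₁ v‖ ≤ L * ‖u - v‖)
    (μ : ℝ) (hμ : 0 < μ)
    (hξ₂conv : ConvexOn ℝ Set.univ ξ₂)
    (hξ₂sc : ∀ u v g, g ∈ SubderivAt ξ₂ v →
      ξ₂ u - ξ₂ v ≥ ⟪g, u - v⟫ + μ / 2 * ‖u - v‖ ^ 2)
    (ustar : EuclideanSpace ℝ (Fin m))
    (hstarmin : ∀ v, ξ₁ ustar + ξ₂ ustar ≤ ξ₁ v + ξ₂ v)
    (uk ukm1 ukm2 uhat : EuclideanSpace ℝ (Fin m))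
    (Lk ω : ℝ) (hLk : 0 < Lk ∧ Lk ≤ L) (hω : 0 ≤ ω ∧ ω ≤ 1)
    (hhat : uhat = ukm1 + ω • (ukm1 - ukm2))
    (hmin : ∀ v : EuclideanSpace ℝ (Fin m),
      ξ₁ uhat + ⟪gradξ₁ uhat, uk - uhat⟫ + Lk / 2 * ‖uk - uhat‖ ^ 2 + ξ₂ uk ≤
      ξ₁ uhat + ⟪gradξ₁ uhat, v - uhat⟫ + Lk / 2 * ‖v - uhat‖ ^ 2 + ξ₂ v) :
    Real.sqrt ((ξ₁ uk + ξ₂ uk) - (ξ₁ ustar + ξ₂ ustar)) ≤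
      2 * L / Real.sqrt μ * (‖uk - ukm1‖ + ‖ukm1 - ukm2‖) := by
  obtain ⟨hLk0, hLkL⟩ := hLk
  obtain ⟨hω0, hω1⟩ := hω
  set d := gradξ₁ uhat with hd
  set g : EuclideanSpace ℝ (Fin m) := -d - Lk • (uk - uhat) with hgdef
  -- Step 1: g is a subgradient of ξ₂ at uk.
  have hsub : g ∈ SubderivAt ξ₂ uk := by
    intro z
    rw [ge_iff_le]
    apply le_of_forall_pos_le_add
    intro ε hε
    set D : ℝ := Lk / 2 * ‖z - uk‖ ^ 2 with hDdef
    have hD0 : 0 ≤ D := by positivity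
    set t : ℝ := min 1 (ε / (D + 1)) with htdef
    have ht0 : 0 < t := lt_min one_pos (by positivity)
    have ht1 : t ≤ 1 := min_le_left _ _
    have htD : t * D ≤ ε := by
      have h1 : t ≤ ε / (D + 1) := min_le_right _ _
      have h2 : t * D ≤ ε / (D + 1) * D := mul_le_mul_of_nonneg_right h1 hD0
      have h3 : ε / (D + 1) * D ≤ ε := by
        rw [div_mul_eq_mul_div, div_le_iff₀ (by positivity)]
        nlinarith
      linarith
    have hmz := hmin (uk + t • (z - uk))
    have hpt : (1 - t) • uk + t • z = uk + t • (z - uk) := by module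
    have hw : ξ₂ (uk + t • (z - uk)) ≤ (1 - t) * ξ₂ uk + t * ξ₂ z := by
      have hconv := hξ₂conv.2 (Set.mem_univ uk) (Set.mem_univ z)
        (by linarith : (0 : ℝ) ≤ 1 - t) ht0.le (by ring)
      rw [hpt] at hconv
      simpa using hconv
    have e0 : uk + t • (z - uk) - uhat = (uk - uhat) + t • (z - uk) := by module
    have e1 : ⟪d, uk + t • (z - uk) - uhat⟫ = ⟪d, uk - uhat⟫ + t * ⟪d, z - uk⟫ := by
      rw [e0, inner_add_right, real_inner_smul_right]
    have e2 : ‖uk + t • (z - uk) - uhat‖ ^ 2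
        = ‖uk - uhat‖ ^ 2 + 2 * t * ⟪uk - uhat, z - uk⟫ + t ^ 2 * ‖z - uk‖ ^ 2 := by
      rw [e0, norm_add_sq_real, real_inner_smul_right, norm_smul]
      simp only [Real.norm_eq_abs, mul_pow, sq_abs]
      ring
    have e3 : ⟪g, z - uk⟫ = -⟪d, z - uk⟫ - Lk * ⟪uk - uhat, z - uk⟫ := by
      rw [hgdef, inner_sub_left, inner_neg_left, real_inner_smul_left]
    rw [e1, e2] at hmz
    have hkey : t * (ξ₂ uk + ⟪g, z - uk⟫) ≤ t * (ξ₂ z + t * D) := by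
      rw [e3, hDdef]
      nlinarith [hmz, hw]
    have := le_of_mul_le_mul_left hkey ht0
    linarith
  -- Step 2: strong convexity at uk in direction ustar.
  have hsc := hξ₂sc ustar uk g hsub
  -- Step 3: convexity of ξ₁.
  have hgrad := grad_convex_lower ξ₁ hξ₁conv uk ustar (gradξ₁ uk) (hξ₁diff uk)
  set a := ‖uk - ustar‖ with ha
  have hna : ‖ustar - uk‖ = a := norm_sub_rev _ _
  set C := 2 * L * ‖uk - uhat‖ with hCdef
  have hC0 : 0 ≤ C := by positivity
  -- bound on the inner product term
  have hgnorm : ‖gradξ₁ uk + g‖ ≤ C := by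
    have hrw : gradξ₁ uk + g = (gradξ₁ uk - gradξ₁ uhat) - Lk • (uk - uhat) := by
      rw [hgdef, hd]; module
    rw [hrw]
    refine (norm_sub_le _ _).trans ?_
    rw [norm_smul, Real.norm_eq_abs, abs_of_nonneg hLk0.le]
    have h1 := hξ₁lip uk uhat
    have h2 : Lk * ‖uk - uhat‖ ≤ L * ‖uk - uhat‖ :=
      mul_le_mul_of_nonneg_right hLkL (norm_nonneg _)
    rw [hCdef]; linarith
  have hinner : ⟪gradξ₁ uk + g, uk - ustar⟫ ≤ C * a := by
    calc ⟪gradξ₁ uk + g, uk - ustar⟫ ≤ ‖gradξ₁ uk + g‖ * ‖uk - ustar‖ :=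
          real_inner_le_norm _ _
      _ ≤ C * a := mul_le_mul_of_nonneg_right hgnorm (norm_nonneg _)
  -- Step 4: gap bound
  have hflip1 : ⟪gradξ₁ uk, ustar - uk⟫ = -⟪gradξ₁ uk, uk - ustar⟫ := by
    rw [show ustar - uk = -(uk - ustar) from (neg_sub _ _).symm, inner_neg_right]
  have hflip2 : ⟪g, ustar - uk⟫ = -⟪g, uk - ustar⟫ := by
    rw [show ustar - uk = -(uk - ustar) from (neg_sub _ _).symm, inner_neg_right]
  have hsplit : ⟪gradξ₁ uk + g, uk - ustar⟫ = ⟪gradξ₁ uk, uk - ustar⟫ + ⟪g, uk - ustar⟫ :=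
    inner_add_left _ _ _
  have hgap : (ξ₁ uk + ξ₂ uk) - (ξ₁ ustar + ξ₂ ustar) ≤ C * a - μ / 2 * a ^ 2 := by
    rw [hflip1] at hgrad
    rw [hflip2, hna] at hsc
    rw [hsplit] at hinner
    linarith [hinner]
  have hgap2 : (ξ₁ uk + ξ₂ uk) - (ξ₁ ustar + ξ₂ ustar) ≤ C ^ 2 / (2 * μ) := by
    have h4 := mul_le_mul_of_nonneg_right hgap (by positivity : (0:ℝ) ≤ 2 * μ)
    have h5 : (C * a - μ / 2 * a ^ 2) * (2 * μ) = C ^ 2 - (μ * a - C) ^ 2 := by ring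
    rw [le_div_iff₀ (by positivity)]
    linarith [sq_nonneg (μ * a - C), h4, h5]
  calc Real.sqrt ((ξ₁ uk + ξ₂ uk) - (ξ₁ ustar + ξ₂ ustar))
      ≤ Real.sqrt (C ^ 2 / (2 * μ)) := Real.sqrt_le_sqrt hgap2
    _ ≤ Real.sqrt (C ^ 2 / μ) := by
        apply Real.sqrt_le_sqrt
        apply div_le_div_of_nonneg_left (sq_nonneg C) hμ
        linarith
    _ = C / Real.sqrt μ := by
        rw [Real.sqrt_div (sq_nonneg C), Real.sqrt_sq hC0]
    _ ≤ 2 * L / Real.sqrt μ * (‖uk - ukm1‖ + ‖ukm1 - ukm2‖) := by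
        have hhatle : ‖uk - uhat‖ ≤ ‖uk - ukm1‖ + ‖ukm1 - ukm2‖ := by
          rw [hhat, show uk - (ukm1 + ω • (ukm1 - ukm2))
            = (uk - ukm1) - ω • (ukm1 - ukm2) from by module]
          refine (norm_sub_le _ _).trans ?_
          rw [norm_smul, Real.norm_eq_abs, abs_of_nonneg hω0]
          nlinarith [norm_nonneg (ukm1 - ukm2)]
        rw [div_mul_eq_mul_div]
        have hle : C ≤ 2 * L * (‖uk - ukm1‖ + ‖ukm1 - ukm2‖) := by
          rw [hCdef]
          exact mul_le_mul_of_nonneg_left hhatle (by positivity)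
        exact (div_le_div_iff_of_pos_right (Real.sqrt_pos.mpr hμ)).mpr hle
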